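/- If a function S = S(Z) taking values in (0,1) satisfies (1) T ⊥ Z | S and (2) S = E[T | S] almost surely, then S equals the propensity score p(Z) = E[T | Z] almost surely. -/

import Mathlib

open MeasureTheory

/-- If `S = S(Z)` takes values in `(0,1)`, satisfies local balance `T ⊥ Z ∣ S` and local
calibration `S = E[T ∣ S]` a.s., then `S` equals the propensity score `E[T ∣ Z]` a.s. -/
theorem conditions_imply_propensity_score
    {Ω : Type*} [MeasurableSpace Ω] (μ : Measure Ω) [IsProbabilityMeasure μ]
    {M : ℕ} (Z : Ω → (Fin M → ℝ)) (hZ : Measurable Z)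
    (T : Ω → ℝ) (hT : Measurable T) (hT01 : ∀ ω, T ω = 0 ∨ T ω = 1)
    (S : Ω → ℝ) (S0 : (Fin M → ℝ) → ℝ) (hS0 : Measurable S0)
    (hSZ : S = fun ω => S0 (Z ω))
    (hS01 : ∀ ω, S ω ∈ Set.Ioo (0 : ℝ) 1)
    (mS : MeasurableSpace Ω) (hmS : mS = MeasurableSpace.comap S inferInstance)
    (hbal : ∀ f : (Fin M → ℝ) → ℝ, Measurable f → (∃ C, ∀ x, |f x| ≤ C) →
      μ[fun ω => T ω * f (Z ω) | mS]
        =ᵐ[μ] fun ω => (μ[T | mS]) ω * (μ[fun ω => f (Z ω) | mS]) ω)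
    (hcal : S =ᵐ[μ] μ[T | mS]) :
    S =ᵐ[μ] μ[T | MeasurableSpace.comap Z inferInstance] := by
  subst hmS
  have hmZ := hZ.comap_le
  have hSmZ : Measurable[MeasurableSpace.comap Z inferInstance] S := by
    rw [hSZ]
    exact hS0.comp (measurable_iff_comap_le.mpr le_rfl)
  have hSmeas := hSmZ.mono hmZ le_rfl
  have hTbd : ∀ ω, |T ω| ≤ 1 := by
    intro ω; rcases hT01 ω with h | h <;> rw [h] <;> norm_num
  have hSbd : ∀ ω, |S ω| ≤ 1 := by
    intro ω; rcases hS01 ω with ⟨h0, h1⟩; rw [abs_of_pos h0]; linarith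
  have hTint : Integrable T μ := by
    refine (integrable_const (1 : ℝ)).mono' hT.aestronglyMeasurable ?_
    filter_upwards with ω using hTbd ω
  have hSint : Integrable S μ := by
    refine (integrable_const (1 : ℝ)).mono' hSmeas.aestronglyMeasurable ?_
    filter_upwards with ω using hSbd ω
  have hmS_le_Z : MeasurableSpace.comap S inferInstance ≤ MeasurableSpace.comap Z inferInstance := by
    rw [hSZ]
    rw [show (fun ω => S0 (Z ω)) = S0 ∘ Z from rfl, ← MeasurableSpace.comap_comp]
    exact MeasurableSpace.comap_mono hS0.comap_le
  have hmS_le := hmS_le_Z.trans hmZ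
  have hSmS : StronglyMeasurable[MeasurableSpace.comap S inferInstance] S :=
    (measurable_iff_comap_le.mpr le_rfl).stronglyMeasurable
  haveI : SigmaFinite (μ.trim hmZ) := by
    have : IsFiniteMeasure (μ.trim hmZ) := isFiniteMeasure_trim hmZ
    infer_instance
  refine ae_eq_condExp_of_forall_setIntegral_eq hmZ hTint
    (fun s _ _ => hSint.integrableOn) ?_ ?_
  · rintro s ⟨A, hA, rfl⟩ -
    set f : (Fin M → ℝ) → ℝ := A.indicator 1 with hf
    have hfmeas : Measurable f := measurable_const.indicator hA
    have hfbd : ∀ x, |f x| ≤ 1 := by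
      intro x
      rw [hf]
      by_cases hx : x ∈ A <;> simp [Set.indicator_apply, hx]
    have hTf : Integrable (fun ω => T ω * f (Z ω)) μ := by
      refine (integrable_const (1 : ℝ)).mono'
        (hT.mul (hfmeas.comp hZ)).aestronglyMeasurable ?_
      filter_upwards with ω
      calc |T ω * f (Z ω)| = |T ω| * |f (Z ω)| := abs_mul _ _
        _ ≤ 1 * 1 := mul_le_mul (hTbd ω) (hfbd _) (abs_nonneg _) zero_le_one
        _ = 1 := one_mul 1
    have hSf : Integrable (fun ω => S ω * f (Z ω)) μ := by
      refine (integrable_const (1 : ℝ)).mono'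
        (hSmeas.mul (hfmeas.comp hZ)).aestronglyMeasurable ?_
      filter_upwards with ω
      calc |S ω * f (Z ω)| = |S ω| * |f (Z ω)| := abs_mul _ _
        _ ≤ 1 * 1 := mul_le_mul (hSbd ω) (hfbd _) (abs_nonneg _) zero_le_one
        _ = 1 := one_mul 1
    have hfZint : Integrable (fun ω => f (Z ω)) μ := by
      refine (integrable_const (1 : ℝ)).mono'
        (hfmeas.comp hZ).aestronglyMeasurable ?_
      filter_upwards with ω using hfbd _
    have h1 : μ[fun ω => T ω * f (Z ω) | MeasurableSpace.comap S inferInstance]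
        =ᵐ[μ] fun ω => S ω * (μ[fun ω => f (Z ω) | MeasurableSpace.comap S inferInstance]) ω := by
      refine (hbal f hfmeas ⟨1, hfbd⟩).trans ?_
      filter_upwards [hcal] with ω hω
      rw [← hω]
    have h2 : (fun ω => S ω * (μ[fun ω => f (Z ω) | MeasurableSpace.comap S inferInstance]) ω)
        =ᵐ[μ] μ[fun ω => S ω * f (Z ω) | MeasurableSpace.comap S inferInstance] :=
      (condExp_mul_of_stronglyMeasurable_left hSmS hSf hfZint).symm
    have hint : ∫ ω, T ω * f (Z ω) ∂μ = ∫ ω, S ω * f (Z ω) ∂μ := by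
      haveI : SigmaFinite (μ.trim hmS_le) := by
        have : IsFiniteMeasure (μ.trim hmS_le) := isFiniteMeasure_trim hmS_le
        infer_instance
      have e1 : ∫ ω, (μ[fun ω => T ω * f (Z ω)|MeasurableSpace.comap S inferInstance]) ω ∂μ = ∫ ω, T ω * f (Z ω) ∂μ :=
        integral_condExp hmS_le
      have e2 : ∫ ω, (μ[fun ω => S ω * f (Z ω)|MeasurableSpace.comap S inferInstance]) ω ∂μ = ∫ ω, S ω * f (Z ω) ∂μ :=
        integral_condExp hmS_le
      rw [← e1, ← e2]
      exact integral_congr_ae (h1.trans h2)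
    have hTind : ∀ ω, T ω * f (Z ω) = (Z ⁻¹' A).indicator T ω := by
      intro ω
      by_cases hx : Z ω ∈ A <;> simp [hf, Set.indicator_apply, hx]
    have hSind : ∀ ω, S ω * f (Z ω) = (Z ⁻¹' A).indicator S ω := by
      intro ω
      by_cases hx : Z ω ∈ A <;> simp [hf, Set.indicator_apply, hx]
    have hmeasset := hZ hA
    calc ∫ x in Z ⁻¹' A, S x ∂μ
        = ∫ x, (Z ⁻¹' A).indicator S x ∂μ := (integral_indicator hmeasset).symm
      _ = ∫ ω, S ω * f (Z ω) ∂μ := by simp_rw [hSind]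
      _ = ∫ ω, T ω * f (Z ω) ∂μ := hint.symm
      _ = ∫ x, (Z ⁻¹' A).indicator T x ∂μ := by simp_rw [hTind]
      _ = ∫ x in Z ⁻¹' A, T x ∂μ := integral_indicator hmeasset
  · exact StronglyMeasurable.aestronglyMeasurable (Measurable.stronglyMeasurable hSmZ)
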